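/- Let A be a d×d real matrix with ‖e^{Ar}‖ ≤ M e^{-λ r} for all r ≥ 0 (M ≥ 1, λ > 0), let β ∈ (0,1) and 0 < s < t. Then sup_{0 ≤ r₁ < r₂ < s} ‖(e^{A(t-r₂)} - e^{A(s-r₂)}) - (e^{A(t-r₁)} - e^{A(s-r₁)})‖ / (r₂-r₁)^β ≤ M² ‖A‖² (t-s) s^{1-β}. -/

import Mathlib

set_option maxHeartbeats 1000000
set_option synthInstance.maxHeartbeats 1000000

open NormedSpace in
lemma aux_exp_lip (d : ℕ) (M lam : ℝ) (hlam : 0 < lam)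
    (A : EuclideanSpace ℝ (Fin d) →L[ℝ] EuclideanSpace ℝ (Fin d))
    (hexp : ∀ r : ℝ, 0 ≤ r → ‖NormedSpace.exp (r • A)‖ ≤ M * Real.exp (-lam * r))
    {a b : ℝ} (ha : 0 ≤ a) (hab : a ≤ b) :
    ‖NormedSpace.exp (b • A) - NormedSpace.exp (a • A)‖ ≤ M * ‖A‖ * (b - a) := by
  have hM0 : 0 ≤ M := by
    have := hexp 0 le_rfl
    have h1 : (0:ℝ) < Real.exp (-lam * 0) := Real.exp_pos _
    nlinarith [norm_nonneg (NormedSpace.exp ((0:ℝ) • A))]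
  have key := Convex.norm_image_sub_le_of_norm_hasDerivWithin_le
    (f := fun u : ℝ => NormedSpace.exp (u • A))
    (f' := fun u : ℝ => NormedSpace.exp (u • A) * A)
    (s := Set.Icc a b) (C := M * ‖A‖)
    (fun x _ => (hasDerivAt_exp_smul_const A x).hasDerivWithinAt)
    (fun x hx => by
      calc ‖NormedSpace.exp (x • A) * A‖ ≤ ‖NormedSpace.exp (x • A)‖ * ‖A‖ :=
            norm_mul_le _ _
        _ ≤ (M * Real.exp (-lam * x)) * ‖A‖ := by
            gcongr; exact hexp x (ha.trans hx.1)
        _ ≤ (M * 1) * ‖A‖ := by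
            gcongr
            exact Real.exp_le_one_iff.2 (by nlinarith [ha.trans hx.1])
        _ = M * ‖A‖ := by ring)
    (convex_Icc a b) ⟨le_refl a, hab⟩ ⟨hab, le_refl b⟩
  calc ‖NormedSpace.exp (b • A) - NormedSpace.exp (a • A)‖
      ≤ M * ‖A‖ * ‖b - a‖ := key
    _ = M * ‖A‖ * (b - a) := by rw [Real.norm_eq_abs, abs_of_nonneg (by linarith)]

/-- Estimate (sem1): β-Hölder seminorm of r ↦ e^{A(t-r)} - e^{A(s-r)} on [0,s]
is bounded by M²‖A‖²(t-s)s^(1-β). -/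
theorem stmt7 (d : ℕ) (M lam β s t : ℝ) (hM : 1 ≤ M) (hlam : 0 < lam)
    (hβ : 0 < β) (hβ1 : β < 1) (hs : 0 < s) (hst : s < t)
    (A : EuclideanSpace ℝ (Fin d) →L[ℝ] EuclideanSpace ℝ (Fin d))
    (hexp : ∀ r : ℝ, 0 ≤ r → ‖NormedSpace.exp (r • A)‖ ≤ M * Real.exp (-lam * r)) :
    ∀ r₁ r₂ : ℝ, 0 ≤ r₁ → r₁ < r₂ → r₂ < s →
      ‖(NormedSpace.exp ((t - r₂) • A) - NormedSpace.exp ((s - r₂) • A)) -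
          (NormedSpace.exp ((t - r₁) • A) - NormedSpace.exp ((s - r₁) • A))‖ /
          (r₂ - r₁) ^ β ≤
        M ^ 2 * ‖A‖ ^ 2 * (t - s) * s ^ (1 - β) := by
  intro r₁ r₂ hr₁ hr₁₂ hr₂s
  set D := NormedSpace.exp ((t - s) • A) with hD
  have hfac : ∀ r : ℝ, r ≤ s →
      NormedSpace.exp ((t - r) • A) = D * NormedSpace.exp ((s - r) • A) := by
    intro r _
    have hsplit : (t - r) • A = (t - s) • A + (s - r) • A := by module
    have hc : Commute ((t - s) • A) ((s - r) • A) := by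
      show _ * _ = _ * _
      ext x
      simp [ContinuousLinearMap.smul_apply, map_smul, smul_smul]
      exact Or.inl (by ring)
    rw [hD, hsplit, NormedSpace.exp_add_of_commute_of_mem_ball (𝕂 := ℝ) hc
      ((NormedSpace.expSeries_radius_eq_top ℝ (EuclideanSpace ℝ (Fin d) →L[ℝ] EuclideanSpace ℝ (Fin d))).symm ▸ edist_lt_top _ _)
      ((NormedSpace.expSeries_radius_eq_top ℝ (EuclideanSpace ℝ (Fin d) →L[ℝ] EuclideanSpace ℝ (Fin d))).symm ▸ edist_lt_top _ _)]
  have hexpand :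
      (NormedSpace.exp ((t - r₂) • A) - NormedSpace.exp ((s - r₂) • A)) -
        (NormedSpace.exp ((t - r₁) • A) - NormedSpace.exp ((s - r₁) • A)) =
      (D - 1) * (NormedSpace.exp ((s - r₂) • A) - NormedSpace.exp ((s - r₁) • A)) := by
    rw [hfac r₁ (by linarith), hfac r₂ (by linarith)]
    rw [mul_sub, sub_mul, sub_mul, one_mul]
    abel
  have h1 : ‖D - 1‖ ≤ M * ‖A‖ * (t - s) := by
    have h := aux_exp_lip d M lam hlam A hexp (a := 0) (b := t - s) le_rfl (by linarith)
    rw [show ((0:ℝ) • A) = 0 from zero_smul ℝ A, NormedSpace.exp_zero, sub_zero] at h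
    simpa [hD] using h
  have h2 : ‖NormedSpace.exp ((s - r₂) • A) - NormedSpace.exp ((s - r₁) • A)‖
      ≤ M * ‖A‖ * (r₂ - r₁) := by
    rw [norm_sub_rev]
    have := aux_exp_lip d M lam hlam A hexp (a := s - r₂) (b := s - r₁)
      (by linarith) (by linarith)
    convert this using 2
    ring
  have hnorm : ‖(NormedSpace.exp ((t - r₂) • A) - NormedSpace.exp ((s - r₂) • A)) -
        (NormedSpace.exp ((t - r₁) • A) - NormedSpace.exp ((s - r₁) • A))‖
      ≤ M ^ 2 * ‖A‖ ^ 2 * (t - s) * (r₂ - r₁) := by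
    rw [hexpand]
    calc ‖(D - 1) * (NormedSpace.exp ((s - r₂) • A) - NormedSpace.exp ((s - r₁) • A))‖
        ≤ ‖D - 1‖ * ‖NormedSpace.exp ((s - r₂) • A) - NormedSpace.exp ((s - r₁) • A)‖ :=
          norm_mul_le _ _
      _ ≤ (M * ‖A‖ * (t - s)) * (M * ‖A‖ * (r₂ - r₁)) := by
          have hA : (0:ℝ) ≤ ‖A‖ := norm_nonneg A
          exact mul_le_mul h1 h2 (norm_nonneg _)
            (mul_nonneg (mul_nonneg (by linarith) hA) (by linarith))
      _ = M ^ 2 * ‖A‖ ^ 2 * (t - s) * (r₂ - r₁) := by ring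
  have hd : 0 < r₂ - r₁ := by linarith
  have hpow : (0:ℝ) < (r₂ - r₁) ^ β := Real.rpow_pos_of_pos hd _
  rw [div_le_iff₀ hpow]
  calc ‖(NormedSpace.exp ((t - r₂) • A) - NormedSpace.exp ((s - r₂) • A)) -
        (NormedSpace.exp ((t - r₁) • A) - NormedSpace.exp ((s - r₁) • A))‖
      ≤ M ^ 2 * ‖A‖ ^ 2 * (t - s) * (r₂ - r₁) := hnorm
    _ = M ^ 2 * ‖A‖ ^ 2 * (t - s) * ((r₂ - r₁) ^ (1 - β) * (r₂ - r₁) ^ β) := by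
        rw [← Real.rpow_add hd, sub_add_cancel, Real.rpow_one]
    _ ≤ M ^ 2 * ‖A‖ ^ 2 * (t - s) * (s ^ (1 - β) * (r₂ - r₁) ^ β) := by
        have hA : (0:ℝ) ≤ ‖A‖ := norm_nonneg A
        have hK : (0:ℝ) ≤ M ^ 2 * ‖A‖ ^ 2 * (t - s) := by
          apply mul_nonneg (mul_nonneg (by nlinarith) (by positivity)) (by linarith)
        have hbase : (r₂ - r₁) ^ (1 - β) ≤ s ^ (1 - β) :=
          Real.rpow_le_rpow hd.le (by linarith) (by linarith)
        exact mul_le_mul_of_nonneg_left (mul_le_mul_of_nonneg_right hbase hpow.le) hK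
    _ = M ^ 2 * ‖A‖ ^ 2 * (t - s) * s ^ (1 - β) * (r₂ - r₁) ^ β := by ring
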